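/- Let d' be an odd positive integer. Then the degree [ℚ(ζ₄, ζ_{d'}, √2) : ℚ(ζ_{d'}, √−2)] = 2, where ζₙ denotes a primitive n-th root of unity and √−2 a square root of −2 in ℂ. -/

import Mathlib

open IntermediateField Polynomial

set_option maxHeartbeats 2000000
set_option synthInstance.maxHeartbeats 400000

/-- For odd `d' > 0`, the degree `[ℚ(ζ₄, ζ_{d'}, √2) : ℚ(ζ_{d'}, √-2)] = 2`. -/
theorem stmt15 (d' : ℕ) (hpos : 0 < d') (hodd : Odd d') (ζ₄ ζd' t : ℂ)
    (h₄ : IsPrimitiveRoot ζ₄ 4) (hd' : IsPrimitiveRoot ζd' d')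
    (ht : t ^ 2 = -2)
    (hle : IntermediateField.adjoin ℚ {ζd', t}
      ≤ IntermediateField.adjoin ℚ {ζ₄, ζd', (Real.sqrt 2 : ℂ)}) :
    Module.finrank (IntermediateField.adjoin ℚ {ζd', t})
      (IntermediateField.extendScalars hle) = 2 := by
  have hcop : Nat.Coprime 8 d' := (show (8:ℕ) = 2^3 by norm_num) ▸ (hodd.coprime_two_left).pow_left 3
  have hs2 : ((Real.sqrt 2 : ℝ) : ℂ) ^ 2 = 2 := by
    norm_cast; rw [Real.sq_sqrt] <;> norm_num
  have h₄sq : ζ₄ ^ 2 = -1 := by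
    have h1 : ζ₄ ^ 4 = 1 := h₄.pow_eq_one
    have h2 : ζ₄ ^ 2 ≠ 1 := h₄.pow_ne_one_of_pos_of_lt (by norm_num) (by norm_num)
    have h : (ζ₄ ^ 2 - 1) * (ζ₄ ^ 2 + 1) = 0 := by linear_combination h1
    rcases mul_eq_zero.mp h with h | h
    · exact absurd (by linear_combination h) h2
    · linear_combination h
  set ζ₈ : ℂ := ((Real.sqrt 2 : ℝ) : ℂ) / 2 * (1 + ζ₄) with hζ₈def
  have h8sq : ζ₈ ^ 2 = ζ₄ := by
    rw [hζ₈def]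
    linear_combination ((1+ζ₄)^2/4) * hs2 + (1/2 : ℂ) * h₄sq
  have h8 : IsPrimitiveRoot ζ₈ 8 := by
    constructor
    · calc ζ₈ ^ 8 = (ζ₈ ^ 2) ^ 4 := by ring
        _ = 1 := by rw [h8sq]; exact h₄.pow_eq_one
    · intro l hl
      have h4l : (4:ℕ) ∣ l := by
        apply h₄.dvd_of_pow_eq_one
        calc ζ₄ ^ l = (ζ₈ ^ l) ^ 2 := by
              rw [← h8sq, ← pow_mul, ← pow_mul, mul_comm]
          _ = 1 := by rw [hl]; ring
      obtain ⟨m, rfl⟩ := h4l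
      have h84 : ζ₈ ^ 4 = -1 := by
        calc ζ₈ ^ 4 = (ζ₈ ^ 2) ^ 2 := by ring
          _ = -1 := by rw [h8sq, h₄sq]
      have : (-1 : ℂ) ^ m = 1 := by
        rw [← h84, ← pow_mul]; exact hl
      have hm : Even m := by
        rcases Nat.even_or_odd m with h | h
        · exact h
        · rw [h.neg_one_pow] at this; norm_num at this
      obtain ⟨k, rfl⟩ := hm
      exact ⟨k, by ring⟩
  -- primitive 8d' root
  set ζ : ℂ := ζ₈ * ζd' with hζdef
  have hζ : IsPrimitiveRoot ζ (8 * d') := by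
    have hc : Nat.Coprime (orderOf ζ₈) (orderOf ζd') := by
      rw [← h8.eq_orderOf, ← hd'.eq_orderOf]; exact hcop
    have h := (Commute.all ζ₈ ζd').orderOf_mul_eq_mul_orderOf_of_coprime hc
    have h2 : orderOf ζ = 8 * d' := by
      rw [hζdef, h, ← h8.eq_orderOf, ← hd'.eq_orderOf]
    exact h2 ▸ IsPrimitiveRoot.orderOf ζ
  -- integrality
  have hroot_int : ∀ (x : ℂ) (n : ℕ), 0 < n → x ^ n = 1 → IsIntegral ℚ x := fun x n hn hx =>
    ⟨X ^ n - C 1, monic_X_pow_sub_C _ hn.ne', by simp [hx]⟩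
  have hζint : IsIntegral ℚ ζ := hroot_int ζ (8 * d') (by positivity) hζ.pow_eq_one
  have hζd'int : IsIntegral ℚ ζd' := hroot_int ζd' d' hpos hd'.pow_eq_one
  have hζd'ne : ζd' ≠ 0 := by
    intro h
    have := hd'.pow_eq_one
    rw [h, zero_pow hpos.ne'] at this
    exact zero_ne_one this
  -- L = ℚ(ζ)
  set M : IntermediateField ℚ ℂ := adjoin ℚ {ζ} with hMdef
  have hmemd : ζd' ∈ M := by
    rcases eq_or_lt_of_le (Nat.one_le_iff_ne_zero.mpr hpos.ne') with h1 | h1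
    · have : ζd' = 1 := by simpa [← h1] using hd'.pow_eq_one
      rw [this]; exact one_mem M
    · obtain ⟨m, -, hm⟩ := Nat.exists_mul_mod_eq_one_of_coprime hcop h1
      have hq : 8 * m = d' * (8 * m / d') + 1 := by
        conv_lhs => rw [← Nat.div_add_mod (8 * m) d', hm]
      have hpow : ζ ^ (8 * m) = ζd' := by
        rw [hζdef, mul_pow]
        rw [show ζ₈ ^ (8 * m) = (ζ₈ ^ 8) ^ m from by rw [← pow_mul], h8.pow_eq_one, one_pow,
          one_mul, hq, pow_succ, show ζd' ^ (d' * (8 * m / d')) = (ζd' ^ d') ^ (8 * m / d') from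
          by rw [← pow_mul], hd'.pow_eq_one, one_pow, one_mul]
      rw [← hpow]
      exact pow_mem (subset_adjoin ℚ _ (Set.mem_singleton ζ)) _
  have hmem8M : ζ₈ ∈ M := by
    have : ζ₈ = ζ * ζd'⁻¹ := by
      rw [hζdef]; field_simp
    rw [this]
    exact mul_mem (subset_adjoin ℚ _ (Set.mem_singleton ζ)) (inv_mem hmemd)
  have hmem4M : ζ₄ ∈ M := h8sq ▸ pow_mem hmem8M 2
  have hsqrt_eq : ((Real.sqrt 2 : ℝ) : ℂ) = ζ₈ * (1 - ζ₄) := by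
    rw [hζ₈def]
    linear_combination (((Real.sqrt 2 : ℝ) : ℂ) / 2) * h₄sq
  have hmemsM : ((Real.sqrt 2 : ℝ) : ℂ) ∈ M := by
    rw [hsqrt_eq]; exact mul_mem hmem8M (sub_mem (one_mem M) hmem4M)
  have hL : adjoin ℚ {ζ₄, ζd', ((Real.sqrt 2 : ℝ) : ℂ)} = M := by
    apply le_antisymm
    · rw [adjoin_le_iff]
      rintro x (rfl | rfl | rfl)
      exacts [hmem4M, hmemd, hmemsM]
    · rw [hMdef, adjoin_le_iff, Set.singleton_subset_iff]
      show ζ ∈ _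
      rw [hζdef, hζ₈def]
      have h4 : ζ₄ ∈ adjoin ℚ {ζ₄, ζd', ((Real.sqrt 2 : ℝ) : ℂ)} :=
        subset_adjoin ℚ _ (by simp)
      have hd : ζd' ∈ adjoin ℚ {ζ₄, ζd', ((Real.sqrt 2 : ℝ) : ℂ)} :=
        subset_adjoin ℚ _ (by simp)
      have hs : ((Real.sqrt 2 : ℝ) : ℂ) ∈ adjoin ℚ {ζ₄, ζd', ((Real.sqrt 2 : ℝ) : ℂ)} :=
        subset_adjoin ℚ _ (by simp)
      have h2m : (2 : ℂ) ∈ adjoin ℚ {ζ₄, ζd', ((Real.sqrt 2 : ℝ) : ℂ)} := by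
        have := add_mem (one_mem (adjoin ℚ {ζ₄, ζd', ((Real.sqrt 2 : ℝ) : ℂ)}))
          (one_mem (adjoin ℚ {ζ₄, ζd', ((Real.sqrt 2 : ℝ) : ℂ)}))
        norm_num at this
        simpa using this
      exact mul_mem (mul_mem (div_mem hs h2m) (add_mem (one_mem _) h4)) hd
  have hfinL : Module.finrank ℚ (adjoin ℚ ({ζ} : Set ℂ)) = 4 * d'.totient := by
    rw [adjoin.finrank hζint, ← Polynomial.cyclotomic_eq_minpoly_rat hζ (by positivity),
      natDegree_cyclotomic, Nat.totient_mul hcop]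
    norm_num [show Nat.totient 8 = 4 from by decide]
  -- the field A = Q(zeta_d')
  set A : IntermediateField ℚ ℂ := adjoin ℚ {ζd'} with hAdef
  have hfinA : Module.finrank ℚ A = d'.totient := by
    rw [hAdef, adjoin.finrank hζd'int, ← Polynomial.cyclotomic_eq_minpoly_rat hd' hpos,
      natDegree_cyclotomic]
  set K : IntermediateField ℚ ℂ := adjoin ℚ {ζd', t} with hKdef
  have hK : K = restrictScalars ℚ (adjoin A {t}) := by
    erw [restrictScalars_adjoin_eq_sup (K := A) (S := {t}), hAdef, ← adjoin_union, Set.singleton_union]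
  have htint : IsIntegral ℚ t := ⟨X ^ 2 + C 2, monic_X_pow_add_C _ two_ne_zero, by simp [ht]⟩
  have htintA : IsIntegral A t := htint.tower_top
  haveI : FiniteDimensional ℚ A := adjoin.finiteDimensional hζd'int
  haveI : FiniteDimensional A (adjoin A ({t} : Set ℂ)) := adjoin.finiteDimensional htintA
  have hAt2 : Module.finrank A (adjoin A ({t} : Set ℂ)) ≤ 2 := by
    rw [adjoin.finrank htintA]
    have hne : (X ^ 2 + C (2 : A) : A[X]) ≠ 0 := by
      intro h
      have := congrArg natDegree h
      rw [natDegree_X_pow_add_C] at this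
      simp at this
    have haeval : (Polynomial.aeval t) (X ^ 2 + C (2 : A)) = 0 := by
      simp only [map_add, map_pow, aeval_X, aeval_C, ht]
      rw [show ((algebraMap A ℂ) 2 : ℂ) = 2 from rfl]
      ring
    have hdeg := minpoly.degree_le_of_ne_zero A t hne haeval
    have := natDegree_le_natDegree hdeg
    rwa [natDegree_X_pow_add_C] at this
  have hKle : Module.finrank ℚ K ≤ d'.totient * 2 := by
    rw [hK]
    have h1 : Module.finrank ℚ A * Module.finrank A (adjoin A ({t} : Set ℂ))
        = Module.finrank ℚ (restrictScalars ℚ (adjoin A ({t} : Set ℂ))) :=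
      Module.finrank_mul_finrank ℚ A (adjoin A ({t} : Set ℂ))
    rw [← h1, hfinA]
    exact Nat.mul_le_mul_left _ hAt2
  -- E = extendScalars hle = K(sqrt 2)
  have htK : t ∈ K := subset_adjoin ℚ _ (by simp)
  have hdKK : ζd' ∈ K := subset_adjoin ℚ _ (by simp)
  have hE : extendScalars hle = adjoin K {ζ₄, ζd', ((Real.sqrt 2 : ℝ) : ℂ)} :=
    extendScalars_adjoin hle
  have hE2 : adjoin K {ζ₄, ζd', ((Real.sqrt 2 : ℝ) : ℂ)}
      = adjoin K {((Real.sqrt 2 : ℝ) : ℂ)} := by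
    apply le_antisymm
    · rw [adjoin_le_iff]
      have htm : t ∈ adjoin K {((Real.sqrt 2 : ℝ) : ℂ)} :=
        IntermediateField.algebraMap_mem (adjoin K {((Real.sqrt 2 : ℝ) : ℂ)}) (⟨t, htK⟩ : K)
      have hsm : ((Real.sqrt 2 : ℝ) : ℂ) ∈ adjoin K {((Real.sqrt 2 : ℝ) : ℂ)} :=
        subset_adjoin K _ (Set.mem_singleton _)
      have h2m : (2 : ℂ) ∈ adjoin K {((Real.sqrt 2 : ℝ) : ℂ)} := by
        have := add_mem (one_mem (adjoin K {((Real.sqrt 2 : ℝ) : ℂ)}))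
          (one_mem (adjoin K {((Real.sqrt 2 : ℝ) : ℂ)}))
        norm_num at this
        simpa using this
      intro x hx
      simp only [Set.mem_insert_iff, Set.mem_singleton_iff] at hx
      rcases hx with h | h | h <;> rw [h]
      · -- ζ₄
        have hfact : (ζ₄ - t * ((Real.sqrt 2 : ℝ) : ℂ) / 2)
            * (ζ₄ + t * ((Real.sqrt 2 : ℝ) : ℂ) / 2) = 0 := by
          linear_combination h₄sq - (((Real.sqrt 2 : ℝ) : ℂ) ^ 2 / 4) * ht
            + ((1 : ℂ) / 2) * hs2
        rcases mul_eq_zero.mp hfact with h | h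
        · have : ζ₄ = t * ((Real.sqrt 2 : ℝ) : ℂ) / 2 := by linear_combination h
          rw [this]
          exact div_mem (mul_mem htm hsm) h2m
        · have : ζ₄ = -(t * ((Real.sqrt 2 : ℝ) : ℂ) / 2) := by linear_combination h
          rw [this]
          exact neg_mem (div_mem (mul_mem htm hsm) h2m)
      · exact IntermediateField.algebraMap_mem (adjoin K {((Real.sqrt 2 : ℝ) : ℂ)}) (⟨ζd', hdKK⟩ : K)
      · exact hsm
    · exact adjoin.mono K _ _ (by simp)
  have hsint : IsIntegral ℚ ((Real.sqrt 2 : ℝ) : ℂ) :=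
    ⟨X ^ 2 - C 2, monic_X_pow_sub_C _ two_ne_zero, by simp [hs2]⟩
  have hsintK : IsIntegral K ((Real.sqrt 2 : ℝ) : ℂ) := hsint.tower_top
  have hEle : Module.finrank K (extendScalars hle) ≤ 2 := by
    rw [hE, hE2, adjoin.finrank hsintK]
    have hne : (X ^ 2 - C (2 : K) : K[X]) ≠ 0 := by
      intro h
      have := congrArg natDegree h
      rw [natDegree_X_pow_sub_C] at this
      simp at this
    have haeval : (Polynomial.aeval ((Real.sqrt 2 : ℝ) : ℂ)) (X ^ 2 - C (2 : K)) = 0 := by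
      simp only [map_sub, map_pow, aeval_X, aeval_C, hs2]
      rw [show ((algebraMap K ℂ) 2 : ℂ) = 2 from rfl]
      ring
    have hdeg := minpoly.degree_le_of_ne_zero K _ hne haeval
    have := natDegree_le_natDegree hdeg
    rwa [natDegree_X_pow_sub_C] at this
  -- tower
  have hfinE : Module.finrank ℚ (extendScalars hle) = 4 * d'.totient := by
    have h1 : Module.finrank ℚ (extendScalars hle)
        = Module.finrank ℚ (adjoin ℚ {ζ₄, ζd', ((Real.sqrt 2 : ℝ) : ℂ)}) := rfl
    rw [h1, hL, hMdef]
    exact hfinL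
  have htower : Module.finrank ℚ K * Module.finrank K (extendScalars hle) = 4 * d'.totient := by
    rw [Module.finrank_mul_finrank ℚ K (extendScalars hle), hfinE]
  have htot : 0 < d'.totient := Nat.totient_pos.mpr hpos
  set n := Module.finrank K (extendScalars hle) with hn
  interval_cases n <;> omega
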